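/- Fix a prefix pattern p of length k and a vector v ∈ ℕ^{k+1}, and let B be a set of vincular patterns. Suppose every permutation π of length k + |v| whose first k letters reduce to p and have spacing vector exactly v contains a copy of some σ ∈ B whose head lies entirely within the first k letters of π. Then v is a gap vector: for every u ≥ v componentwise, every permutation whose first k letters reduce to p with spacing vector u contains some pattern of B. -/

import Mathlib

/-- A set of vincular patterns: each pattern is a length `k`, a permutation of `Fin k`,
and a set of adjacency positions `X ⊆ {1,...,k-1}` (1-based). -/
abbrev PatSet := Set (Σ k : ℕ, Equiv.Perm (Fin k) × Finset ℕ)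

/-- `π` contains the vincular pattern `(σ, X)`: there are strictly increasing positions
whose letters are order-isomorphic to `σ`, with positions `x` and `x+1` (1-based) adjacent
for each `x ∈ X`. -/
def ContainsV {n k : ℕ} (π : Equiv.Perm (Fin n)) (σ : Equiv.Perm (Fin k))
    (X : Finset ℕ) : Prop :=
  ∃ i : Fin k → Fin n, StrictMono i ∧
    (∀ a b : Fin k, π (i a) < π (i b) ↔ σ a < σ b) ∧
    (∀ x ∈ X, ∀ (hx : x < k) (hx' : x - 1 < k),
      (i ⟨x, hx⟩ : ℕ) = (i ⟨x - 1, hx'⟩ : ℕ) + 1)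

/-- `π` avoids every pattern in `B`. -/
def AvoidsAll {n : ℕ} (π : Equiv.Perm (Fin n)) (B : PatSet) : Prop :=
  ∀ b ∈ B, ¬ ContainsV π b.2.1 b.2.2

/-- The `i`-th entry (0-based) of the spacing vector of the word `w`: the number of
values of `Fin n` not among the letters of `w` having exactly `i` letters of `w` below them. -/
def spacing {n k : ℕ} (w : Fin k → Fin n) (i : ℕ) : ℕ :=
  (Finset.univ.filter fun m : Fin n =>
    (∀ j, w j ≠ m) ∧ (Finset.univ.filter fun j => w j < m).card = i).card

/-- `π` contains a copy of the vincular pattern `(σ, X)` whose head (the part of `σ`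
up to position `max X + 1`, 1-based) lies entirely within the first `k` letters. -/
def ContainsWithHead {n ℓ : ℕ} (k : ℕ) (π : Equiv.Perm (Fin n))
    (σ : Equiv.Perm (Fin ℓ)) (X : Finset ℕ) : Prop :=
  ∃ i : Fin ℓ → Fin n, StrictMono i ∧
    (∀ a b : Fin ℓ, π (i a) < π (i b) ↔ σ a < σ b) ∧
    (∀ x ∈ X, ∀ (hx : x < ℓ) (hx' : x - 1 < ℓ),
      (i ⟨x, hx⟩ : ℕ) = (i ⟨x - 1, hx'⟩ : ℕ) + 1) ∧
    (∀ a : Fin ℓ, (a : ℕ) ≤ X.sup id → (i a : ℕ) < k)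

lemma enum_fix {n m k : ℕ} (hkn : k ≤ n) (S : Finset (Fin n)) (hS : S.card = m)
    (hmem : ∀ j (hj : j < k), (⟨j, lt_of_lt_of_le hj hkn⟩ : Fin n) ∈ S) :
    ∀ a : Fin m, (a : ℕ) < k → ((S.orderEmbOfFin hS a : Fin n) : ℕ) = (a : ℕ) := by
  have le_app : ∀ (j : ℕ) (a : Fin m), (a : ℕ) = j → j ≤ (S.orderEmbOfFin hS a : ℕ) := by
    intro j
    induction j with
    | zero => intro a _; exact Nat.zero_le _
    | succ j ih =>
        intro a ha
        have hj : j < m := by omega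
        have hlt : (⟨j, hj⟩ : Fin m) < a := by simp [Fin.lt_def, ha]
        have h1 := (S.orderEmbOfFin hS).strictMono hlt
        have h2 := ih ⟨j, hj⟩ rfl
        have : (S.orderEmbOfFin hS ⟨j, hj⟩ : ℕ) < (S.orderEmbOfFin hS a : ℕ) := h1
        omega
  have key : ∀ (j : ℕ) (a : Fin m), (a : ℕ) = j → (a : ℕ) < k →
      ((S.orderEmbOfFin hS a : Fin n) : ℕ) = (a : ℕ) := by
    intro j
    induction j using Nat.strong_induction_on with
    | _ j IH =>
      intro a haj ha
      have hge : (a:ℕ) ≤ (S.orderEmbOfFin hS a : ℕ) := le_app _ a rfl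
      have hx : (⟨(a:ℕ), lt_of_lt_of_le ha hkn⟩ : Fin n) ∈ S := hmem _ ha
      have : (⟨(a:ℕ), lt_of_lt_of_le ha hkn⟩ : Fin n) ∈ Set.range (S.orderEmbOfFin hS) := by
        rw [Finset.range_orderEmbOfFin]; exact hx
      obtain ⟨c, hc⟩ := this
      have hcval : (S.orderEmbOfFin hS c : ℕ) = (a:ℕ) := by rw [hc]
      have hca : (c:ℕ) ≤ (a:ℕ) := hcval ▸ le_app _ c rfl
      rcases eq_or_lt_of_le hca with hca' | hca'
      · have : c = a := Fin.ext hca'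
        rw [← this, hcval, this]
      · have := IH (c:ℕ) (by omega) c rfl (by omega)
        omega
  exact fun a ha => key _ a rfl ha

/-- Gap vector test: if every permutation with prefix pattern `p` and prefix spacing
vector exactly `v` contains a copy of some pattern of `B` whose head lies in the first
`k` letters, then `v` is a gap vector: for any `u ≥ v`, every permutation whose first
`k` letters reduce to `p` with spacing vector `u` contains a pattern of `B`. -/
theorem stmt11 {k : ℕ} (B : PatSet) (p : Equiv.Perm (Fin k)) (v : Fin (k + 1) → ℕ)
    (H : ∀ π : Equiv.Perm (Fin (k + ∑ i, v i)),
      (∀ a b : Fin k,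
        π (Fin.castLE (Nat.le_add_right k _) a) < π (Fin.castLE (Nat.le_add_right k _) b) ↔
          p a < p b) →
      (∀ i : Fin (k + 1),
        spacing (fun a : Fin k => π (Fin.castLE (Nat.le_add_right k _) a)) (i : ℕ) = v i) →
      ∃ b ∈ B, ContainsWithHead k π b.2.1 b.2.2) :
    ∀ u : Fin (k + 1) → ℕ, (∀ i, v i ≤ u i) →
      ∀ n (h : k ≤ n) (π : Equiv.Perm (Fin n)),
        (∀ a b : Fin k, π (Fin.castLE h a) < π (Fin.castLE h b) ↔ p a < p b) →
        (∀ i : Fin (k + 1), spacing (fun a : Fin k => π (Fin.castLE h a)) (i : ℕ) = u i) →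
        ∃ b ∈ B, ContainsV π b.2.1 b.2.2 := by
  classical
  intro u hu n h π hpat hsp
  set m := k + ∑ i, v i with hm
  have hkm : k ≤ m := Nat.le_add_right _ _
  -- the gap sets
  set Gap : Fin (k + 1) → Finset (Fin n) := fun i =>
    Finset.univ.filter fun t =>
      (∀ j : Fin k, π (Fin.castLE h j) ≠ t) ∧
      (Finset.univ.filter fun j : Fin k => π (Fin.castLE h j) < t).card = (i : ℕ) with hGapdef
  have hGapcard : ∀ i, (Gap i).card = u i := fun i => hsp i
  have hchoose : ∀ i : Fin (k + 1), ∃ G ⊆ Gap i, G.card = v i := fun i =>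
    Finset.exists_subset_card_eq (by rw [hGapcard]; exact hu i)
  choose G hGsub hGcard using hchoose
  -- prefix values
  set P : Finset (Fin n) := Finset.univ.image (fun a : Fin k => π (Fin.castLE h a)) with hPdef
  have hinjpre : Function.Injective (fun a : Fin k => π (Fin.castLE h a)) :=
    π.injective.comp (Fin.castLE_injective h)
  have hPcard : P.card = k := by
    rw [hPdef, Finset.card_image_of_injective _ hinjpre, Finset.card_univ, Fintype.card_fin]
  set T : Finset (Fin n) := P ∪ Finset.univ.biUnion G with hTdef
  have hGdisj : ∀ i j : Fin (k+1), i ≠ j → Disjoint (G i) (G j) := by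
    intro i j hij
    rw [Finset.disjoint_left]
    intro t hti htj
    have h1 := (Finset.mem_filter.mp (hGsub i hti)).2.2
    have h2 := (Finset.mem_filter.mp (hGsub j htj)).2.2
    exact hij (Fin.ext (h1 ▸ h2))
  have hPdisj : Disjoint P (Finset.univ.biUnion G) := by
    rw [Finset.disjoint_left]
    intro t htP htG
    obtain ⟨i, _, hti⟩ := Finset.mem_biUnion.mp htG
    obtain ⟨a, _, ha⟩ := Finset.mem_image.mp htP
    exact (Finset.mem_filter.mp (hGsub i hti)).2.1 a ha
  have hTcard : T.card = m := by
    rw [hTdef, Finset.card_union_of_disjoint hPdisj, hPcard,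
      Finset.card_biUnion (fun i _ j _ hij => hGdisj i j hij)]
    simp [hm, hGcard]
  -- positions to keep
  set S : Finset (Fin n) := T.image π.symm with hSdef
  have hScard : S.card = m := by
    rw [hSdef, Finset.card_image_of_injective _ π.symm.injective, hTcard]
  have hmemS : ∀ x : Fin n, x ∈ S ↔ π x ∈ T := by
    intro x
    simp only [hSdef, Finset.mem_image]
    constructor
    · rintro ⟨t, ht, rfl⟩; simpa using ht
    · intro hx; exact ⟨π x, hx, by simp⟩
  have hprefT : ∀ a : Fin k, π (Fin.castLE h a) ∈ T := by
    intro a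
    exact Finset.mem_union_left _ (Finset.mem_image.mpr ⟨a, Finset.mem_univ _, rfl⟩)
  have hprefS : ∀ j (hj : j < k), (⟨j, lt_of_lt_of_le hj h⟩ : Fin n) ∈ S := by
    intro j hj
    rw [hmemS]
    exact hprefT ⟨j, hj⟩
  set e : Fin m ↪o Fin n := S.orderEmbOfFin hScard with hedef
  have hek : ∀ a : Fin m, (a : ℕ) < k → ((e a : Fin n) : ℕ) = (a : ℕ) :=
    enum_fix h S hScard hprefS
  have heT : ∀ a : Fin m, π (e a) ∈ T := fun a =>
    (hmemS _).mp (Finset.orderEmbOfFin_mem S hScard a)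
  set fT : Fin m ≃o {x // x ∈ T} := T.orderIsoOfFin hTcard with hfTdef
  set φ : Fin m → Fin m := fun a => fT.symm ⟨π (e a), heT a⟩ with hφdef
  have hφinj : Function.Injective φ := by
    intro a b hab
    have : (⟨π (e a), heT a⟩ : {x // x ∈ T}) = ⟨π (e b), heT b⟩ :=
      fT.symm.injective hab
    exact e.injective (π.injective (Subtype.ext_iff.mp this))
  set π' : Equiv.Perm (Fin m) := Equiv.ofBijective φ
    (Finite.injective_iff_bijective.mp hφinj) with hπ'def
  have hπ'app : ∀ a, π' a = φ a := fun a => rfl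
  have horder : ∀ a b : Fin m, π' a < π' b ↔ π (e a) < π (e b) := by
    intro a b
    rw [hπ'app, hπ'app, hφdef]
    simp only
    rw [fT.symm.lt_iff_lt]
    exact Subtype.mk_lt_mk
  have hecast : ∀ a : Fin k, e (Fin.castLE hkm a) = Fin.castLE h a := by
    intro a
    apply Fin.ext
    exact hek (Fin.castLE hkm a) a.isLt
  -- prefix pattern of π'
  have hpat' : ∀ a b : Fin k,
      π' (Fin.castLE hkm a) < π' (Fin.castLE hkm b) ↔ p a < p b := by
    intro a b
    rw [horder, hecast, hecast]
    exact hpat a b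
  -- prefix spacing of π'
  have hπ'pre : ∀ j : Fin k, π' (Fin.castLE hkm j) = fT.symm ⟨π (Fin.castLE h j), hprefT j⟩ := by
    intro j
    rw [hπ'app, hφdef]
    simp only
    congr 1
    exact Subtype.ext (congrArg π (hecast j))
  have hGiT : ∀ (i : Fin (k+1)) {t : Fin n}, t ∈ G i → t ∈ T := by
    intro i t ht
    exact Finset.mem_union_right _ (Finset.mem_biUnion.mpr ⟨i, Finset.mem_univ _, ht⟩)
  have hQiff : ∀ (i : Fin (k+1)) (m' : Fin m),
      ((∀ j : Fin k, π' (Fin.castLE hkm j) ≠ m') ∧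
        (Finset.univ.filter fun j : Fin k => π' (Fin.castLE hkm j) < m').card = (i:ℕ))
      ↔ ((fT m' : Fin n) ∈ G i) := by
    intro i m'
    set t : Fin n := (fT m' : Fin n) with htdef
    have hA : ∀ j : Fin k, (π' (Fin.castLE hkm j) ≠ m' ↔ π (Fin.castLE h j) ≠ t) := by
      intro j
      rw [hπ'pre]
      constructor
      · intro hne heq
        apply hne
        have : (⟨π (Fin.castLE h j), hprefT j⟩ : {x // x ∈ T}) = fT m' :=
          Subtype.ext heq
        rw [this]; simp
      · intro hne heq
        apply hne
        have := congrArg fT heq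
        simp only [OrderIso.apply_symm_apply] at this
        exact congrArg Subtype.val this
    have hB : ∀ j : Fin k, (π' (Fin.castLE hkm j) < m' ↔ π (Fin.castLE h j) < t) := by
      intro j
      rw [hπ'pre]
      have hm'eq : m' = fT.symm ⟨t, (fT m').2⟩ := by simp [htdef]
      rw [hm'eq, fT.symm.lt_iff_lt]
      exact Subtype.mk_lt_mk
    have hfilter : (Finset.univ.filter fun j : Fin k => π' (Fin.castLE hkm j) < m')
        = Finset.univ.filter fun j : Fin k => π (Fin.castLE h j) < t := by
      apply Finset.filter_congr
      intro j _
      exact hB j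
    constructor
    · rintro ⟨h1, h2⟩
      have h1' : ∀ j : Fin k, π (Fin.castLE h j) ≠ t := fun j => (hA j).mp (h1 j)
      have h2' : (Finset.univ.filter fun j : Fin k => π (Fin.castLE h j) < t).card = (i:ℕ) := by
        rw [← hfilter]; exact h2
      -- t ∈ T, and t satisfies the Gap i condition; show t ∈ G i
      have htT : t ∈ T := (fT m').2
      rcases Finset.mem_union.mp htT with htP | htG
      · obtain ⟨a, _, ha⟩ := Finset.mem_image.mp htP
        exact absurd ha (h1' a)
      · obtain ⟨i', _, hti'⟩ := Finset.mem_biUnion.mp htG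
        have : (Finset.univ.filter fun j : Fin k => π (Fin.castLE h j) < t).card = (i':ℕ) :=
          (Finset.mem_filter.mp (hGsub i' hti')).2.2
        have : i' = i := Fin.ext (by omega)
        exact this ▸ hti'
    · intro htG
      have hGap := Finset.mem_filter.mp (hGsub i htG)
      refine ⟨fun j => (hA j).mpr (hGap.2.1 j), ?_⟩
      rw [hfilter]
      exact hGap.2.2
  have hsp' : ∀ i : Fin (k + 1),
      spacing (fun a : Fin k => π' (Fin.castLE hkm a)) (i : ℕ) = v i := by
    intro i
    rw [← hGcard i]
    apply Finset.card_bij (fun m' _ => (fT m' : Fin n))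
    · intro m' hm'
      have := Finset.mem_filter.mp hm'
      exact (hQiff i m').mp this.2
    · intro a _ b _ hab
      exact fT.injective (Subtype.ext hab)
    · intro t ht
      refine ⟨fT.symm ⟨t, hGiT i ht⟩, ?_, by simp⟩
      rw [Finset.mem_filter]
      refine ⟨Finset.mem_univ _, ?_⟩
      apply (hQiff i _).mpr
      simpa using ht
  -- apply the hypothesis
  obtain ⟨b, hbB, i, hmono, hiso, hadj, hhead⟩ := H π' hpat' hsp'
  refine ⟨b, hbB, fun a => e (i a), e.strictMono.comp hmono, ?_, ?_⟩
  · intro a c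
    rw [← horder]
    exact hiso a c
  · intro x hxX hx hx'
    have hxle : x ≤ b.2.2.sup id := Finset.le_sup (f := id) hxX
    have h1 : (i ⟨x, hx⟩ : ℕ) < k := hhead _ hxle
    have h2 : (i ⟨x - 1, hx'⟩ : ℕ) < k := hhead _ (le_trans (Nat.sub_le x 1) hxle)
    rw [hek _ h1, hek _ h2]
    exact hadj x hxX hx hx'
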